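/- Let X be a real Banach space such that for every unit vector x, the pair (x, x) is a CPP. Then X is strictly convex. -/

import Mathlib

open Metric

/-- Birkhoff-James orthogonality: `x ⊥_B y` iff `‖x + t y‖ ≥ ‖x‖` for all real `t`. -/
def BJOrth {X : Type*} [NormedAddCommGroup X] [NormedSpace ℝ X] (x y : X) : Prop :=
  ∀ t : ℝ, ‖x‖ ≤ ‖x + t • y‖

/-- `(x, y)` is a compatible point pair with constant `(r, μ)`. -/
def IsCPPConst {X Y : Type*} [NormedAddCommGroup X] [NormedSpace ℝ X]
    [NormedAddCommGroup Y] [NormedSpace ℝ Y] (x : X) (y : Y) (r μ : ℝ) : Prop :=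
  ∀ z : X, ‖z‖ = 1 → BJOrth x z → ∀ w : Y, ‖w‖ = 1 → BJOrth y w →
    ∀ a b : ℝ, ‖a • x + b • z - x‖ ≤ r → ‖a • x + b • z‖ = 1 →
      ‖a • y + (b * μ) • w‖ ≤ 1

/-- `(x, y)` is a compatible point pair (CPP). -/
def IsCPP {X Y : Type*} [NormedAddCommGroup X] [NormedSpace ℝ X]
    [NormedAddCommGroup Y] [NormedSpace ℝ Y] (x : X) (y : Y) : Prop :=
  ∃ r > 0, ∃ μ > 0, IsCPPConst x y r μ

/-- `(x, y)` is a weakly compatible point pair (weak CPP). -/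
def IsWeakCPP {X Y : Type*} [NormedAddCommGroup X] [NormedSpace ℝ X]
    [NormedAddCommGroup Y] [NormedSpace ℝ Y] (x : X) (y : Y) : Prop :=
  ∃ z : X, ‖z‖ = 1 ∧ BJOrth x z ∧ ∃ w : Y, ‖w‖ = 1 ∧ BJOrth y w ∧
    ∃ r > 0, ∃ μ > 0, ∀ a b : ℝ, ‖a • x + b • z - x‖ ≤ r → ‖a • x + b • z‖ = 1 →
      ‖a • y + (b * μ) • w‖ ≤ 1

/-- A normed space is smooth if every unit vector has a unique supporting functional. -/
def SmoothSp (X : Type*) [NormedAddCommGroup X] [NormedSpace ℝ X] : Prop :=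
  ∀ x : X, ‖x‖ = 1 → ∃! f : X →L[ℝ] ℝ, ‖f‖ = 1 ∧ f x = 1

theorem stmt16 {X : Type*} [NormedAddCommGroup X] [NormedSpace ℝ X] [CompleteSpace X]
    (h : ∀ x : X, ‖x‖ = 1 → IsCPP x x) :
    StrictConvexSpace ℝ X := by
  apply StrictConvexSpace.of_norm_add_ne_two
  intro x y hx hy hne hadd
  -- Setup: midpoint m, direction z, half-length c
  set m : X := (2 : ℝ)⁻¹ • (x + y) with hm
  have hd : (0 : ℝ) < ‖y - x‖ := by
    rw [norm_pos_iff, sub_ne_zero]; exact hne.symm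
  set c : ℝ := ‖y - x‖ / 2 with hcdef
  have hcpos : 0 < c := by positivity
  set z : X := ‖y - x‖⁻¹ • (y - x) with hzdef
  have hz : ‖z‖ = 1 := by
    rw [hzdef, norm_smul, norm_inv, norm_norm, inv_mul_cancel₀ hd.ne']
  have hmy : m + c • z = y := by
    rw [hm, hcdef, hzdef, smul_smul]
    have h2 : ‖y - x‖ / 2 * ‖y - x‖⁻¹ = (2 : ℝ)⁻¹ := by field_simp
    rw [h2]; match_scalars <;> ring
  have hmx : m + (-c) • z = x := by
    rw [hm, hcdef, hzdef, smul_smul]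
    have h2 : -(‖y - x‖ / 2) * ‖y - x‖⁻¹ = -(2 : ℝ)⁻¹ := by field_simp
    rw [h2]; match_scalars <;> ring
  have hmnorm : ‖m‖ = 1 := by
    rw [hm, norm_smul, hadd]; norm_num
  clear_value m c z
  -- points of the segment have norm ≤ 1
  have hA : ∀ t : ℝ, -c ≤ t → t ≤ c → ‖m + t • z‖ ≤ 1 := by
    intro t h1 h2
    have key : m + t • z = ((c - t) / (2 * c)) • x + ((c + t) / (2 * c)) • y := by
      rw [← hmx, ← hmy]
      match_scalars <;> field_simp <;> ring
    have e1 : (0:ℝ) ≤ (c - t) / (2 * c) := div_nonneg (by linarith) (by linarith)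
    have e2 : (0:ℝ) ≤ (c + t) / (2 * c) := by
      apply div_nonneg (by linarith) (by linarith)
    calc ‖m + t • z‖ ≤ ‖((c - t) / (2 * c)) • x‖ + ‖((c + t) / (2 * c)) • y‖ := by
          rw [key]; exact norm_add_le _ _
      _ = (c - t) / (2 * c) + (c + t) / (2 * c) := by
          rw [norm_smul, norm_smul, hx, hy, Real.norm_eq_abs, Real.norm_eq_abs,
            abs_of_nonneg e1, abs_of_nonneg e2]; ring
      _ = 1 := by field_simp; ring
  -- every point of the line has norm ≥ 1 : beyond-the-segment lemma
  have hout : ∀ (w : X) (t : ℝ), c < t → ‖m + c • w‖ = 1 → ‖w‖ = 1 →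
      1 ≤ ‖m + t • w‖ := by
    intro w t hct h1 hw
    have htpos : 0 < t := hcpos.trans hct
    have key : m + c • w = (1 - c / t) • m + (c / t) • (m + t • w) := by
      match_scalars <;> field_simp <;> ring
    have hle : (0:ℝ) ≤ 1 - c / t := by
      have : c / t < 1 := (div_lt_one htpos).2 hct
      linarith
    have hct' : (0:ℝ) ≤ c / t := by positivity
    have hb : 1 ≤ (1 - c / t) * ‖m‖ + (c / t) * ‖m + t • w‖ := by
      calc (1:ℝ) = ‖m + c • w‖ := h1.symm
        _ ≤ ‖(1 - c / t) • m‖ + ‖(c / t) • (m + t • w)‖ := by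
            rw [key]; exact norm_add_le _ _
        _ = (1 - c / t) * ‖m‖ + (c / t) * ‖m + t • w‖ := by
            have n1 : ‖(1 - c / t) • m‖ = (1 - c / t) * ‖m‖ := by
              rw [norm_smul, Real.norm_eq_abs, abs_of_nonneg hle]
            have n2 : ‖(c / t) • (m + t • w)‖ = (c / t) * ‖m + t • w‖ := by
              rw [norm_smul, Real.norm_eq_abs, abs_of_nonneg hct']
            rw [n1, n2]
    rw [hmnorm] at hb
    have hctpos : 0 < c / t := by positivity
    nlinarith
  have hB : ∀ t : ℝ, 1 ≤ ‖m + t • z‖ := by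
    intro t
    rcases le_or_gt t c with h1 | h1
    · rcases le_or_gt (-c) t with h2 | h2
      · -- inside the segment
        have hsum : (m + (-t) • z) + (m + t • z) = x + y := by
          rw [← hmx, ← hmy]; match_scalars <;> ring
        have : (2:ℝ) ≤ ‖m + (-t) • z‖ + ‖m + t • z‖ := by
          calc (2:ℝ) = ‖x + y‖ := hadd.symm
            _ = ‖(m + (-t) • z) + (m + t • z)‖ := by rw [hsum]
            _ ≤ _ := norm_add_le _ _
        have := hA (-t) (by linarith) (by linarith)
        linarith
      · -- t < -c : use direction -z
        have h1' : ‖m + c • (-z)‖ = 1 := by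
          have : m + c • (-z) = m + (-c) • z := by module
          rw [this, hmx]; exact hx
        have := hout (-z) (-t) (by linarith) h1' (by rw [norm_neg, hz])
        have he : m + (-t) • (-z) = m + t • z := by module
        rwa [he] at this
    · exact hout z t h1 (by rw [hmy]; exact hy) hz
  -- the set of parameters on the unit sphere
  set S : Set ℝ := {t : ℝ | ‖m + t • z‖ ≤ 1} with hSdef
  have hS_closed : IsClosed S := by
    have : Continuous fun t : ℝ => ‖m + t • z‖ := by fun_prop
    exact isClosed_le this continuous_const
  have hS_bdd : BddAbove S := by
    refine ⟨2, fun t ht => ?_⟩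
    have h1 : ‖t • z‖ ≤ ‖m + t • z‖ + ‖m‖ := by
      simpa using norm_sub_le (m + t • z) m
    rw [norm_smul, hz, mul_one, Real.norm_eq_abs, hmnorm] at h1
    have := le_abs_self t
    simp only [hSdef, Set.mem_setOf_eq] at ht
    linarith
  have hcS : c ∈ S := by
    simp only [hSdef, Set.mem_setOf_eq, hmy, hy, le_refl]
  set T : ℝ := sSup S with hTdef
  have hT : T ∈ S := hS_closed.csSup_mem ⟨c, hcS⟩ hS_bdd
  have hTc : c ≤ T := le_csSup hS_bdd hcS
  set v : X := m + T • z with hvdef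
  clear_value T
  have hv : ‖v‖ = 1 := le_antisymm hT (hB T)
  have hvz : BJOrth v z := by
    intro t
    have : v + t • z = m + (T + t) • z := by rw [hvdef]; module
    rw [hv, this]; exact hB (T + t)
  have hvnz : BJOrth v (-z) := by
    intro t
    have : v + t • (-z) = m + (T + (-t)) • z := by rw [hvdef]; module
    rw [hv, this]; exact hB (T + (-t))
  obtain ⟨r, hr, μ, hμ, hCPP⟩ := h v hv
  set s : ℝ := min r (2 * c) with hsdef
  have hspos : 0 < s := lt_min hr (by linarith)
  have hsr : s ≤ r := min_le_left _ _
  have hsc : s ≤ 2 * c := min_le_right _ _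
  -- T - s is still in the segment
  have hTs : ‖m + (T - s) • z‖ = 1 := by
    refine le_antisymm ?_ (hB _)
    -- convex combination of x = m + (-c) z and v = m + T z
    have hTcpos : 0 < T + c := by linarith
    have key : m + (T - s) • z = (s / (T + c)) • x + ((T + c - s) / (T + c)) • v := by
      rw [← hmx, hvdef]
      match_scalars <;> field_simp <;> ring
    have e1 : (0:ℝ) ≤ s / (T + c) := by positivity
    have e2 : (0:ℝ) ≤ (T + c - s) / (T + c) := div_nonneg (by linarith) (by linarith)
    calc ‖m + (T - s) • z‖
        ≤ ‖(s / (T + c)) • x‖ + ‖((T + c - s) / (T + c)) • v‖ := by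
          rw [key]; exact norm_add_le _ _
      _ = s / (T + c) + (T + c - s) / (T + c) := by
          rw [norm_smul, norm_smul, hx, hv, Real.norm_eq_abs, Real.norm_eq_abs,
            abs_of_nonneg e1, abs_of_nonneg e2]; ring
      _ = 1 := by field_simp; ring
  -- apply CPP with a = 1, b = -s, w = -z
  have hhyp1 : ‖(1:ℝ) • v + (-s) • z - v‖ ≤ r := by
    have : (1:ℝ) • v + (-s) • z - v = (-s) • z := by module
    rw [this, norm_smul, hz, mul_one, Real.norm_eq_abs, abs_neg, abs_of_pos hspos]
    exact hsr
  have hhyp2 : ‖(1:ℝ) • v + (-s) • z‖ = 1 := by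
    have : (1:ℝ) • v + (-s) • z = m + (T - s) • z := by rw [hvdef]; module
    rw [this]; exact hTs
  have hconc := hCPP z hz hvz (-z) (by rw [norm_neg, hz]) hvnz 1 (-s) hhyp1 hhyp2
  have hkey : (1:ℝ) • v + (-s * μ) • (-z) = m + (T + s * μ) • z := by
    rw [hvdef]; module
  rw [hkey] at hconc
  have hmem : T + s * μ ∈ S := by
    simp only [hSdef, Set.mem_setOf_eq]; exact hconc
  have : T + s * μ ≤ T := by
    have h2 := le_csSup hS_bdd hmem
    rwa [← hTdef] at h2
  nlinarith
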